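/- Let F be a field, let R = F[X; ℚ≥0] be the additive monoid ring of the monoid of nonnegative rationals over F, let m be the maximal ideal of R consisting of all elements with zero constant term, and let D = R_m be the localization of R at m. Then D is a Bézout domain. -/

import Mathlib

open scoped Classical

/-- The "constant term" homomorphism of a monoid algebra `F[X; M]`, for a monoid `M` in
which `a + b = 0` forces `a = b = 0`; it sends `a₁X^{α₁} + ⋯ + aₙX^{αₙ}` to its
coefficient at the identity `0` of `M` (see `constantTermHom_apply`). -/
noncomputable def constantTermHom (F M : Type*) [Field F] [AddCommMonoid M]
    (hM : ∀ a b : M, a + b = 0 → a = 0 ∧ b = 0) : AddMonoidAlgebra F M →ₐ[F] F :=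
  AddMonoidAlgebra.lift F F M
    { toFun := fun a => if a.toAdd = 0 then 1 else 0
      map_one' := by simp
      map_mul' := fun a b => by
        rcases em (a.toAdd = 0) with ha | ha
        · rcases em (b.toAdd = 0) with hb | hb
          · simp [ha, hb]
          · have h : a.toAdd + b.toAdd ≠ 0 := fun h => hb (hM _ _ h).2
            simp [ha, hb, toAdd_mul, h]
        · have h : a.toAdd + b.toAdd ≠ 0 := fun h => ha (hM _ _ h).1
          simp [ha, toAdd_mul, h] }

theorem constantTermHom_apply (F M : Type*) [Field F] [AddCommMonoid M]
    (hM : ∀ a b : M, a + b = 0 → a = 0 ∧ b = 0) (f : AddMonoidAlgebra F M) :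
    constantTermHom F M hM f = f.coeff 0 := by
  classical
  rw [constantTermHom, AddMonoidAlgebra.lift_apply]
  simp only [MonoidHom.coe_mk, OneHom.coe_mk, toAdd_ofAdd, smul_eq_mul, mul_ite, mul_one,
    mul_zero]
  rw [Finsupp.sum_ite_eq' f.coeff 0 (fun _ b => b)]
  split
  · rfl
  · next h => exact (Finsupp.notMem_support_iff.mp h).symm

/-- The augmentation ideal of the monoid algebra `F[X; M]`, consisting of all elements
with zero constant term (zero coefficient at the identity of `M`). -/
noncomputable def augIdeal (F M : Type*) [Field F] [AddCommMonoid M]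
    (hM : ∀ a b : M, a + b = 0 → a = 0 ∧ b = 0) : Ideal (AddMonoidAlgebra F M) :=
  RingHom.ker (constantTermHom F M hM)

theorem mem_augIdeal_iff (F M : Type*) [Field F] [AddCommMonoid M]
    (hM : ∀ a b : M, a + b = 0 → a = 0 ∧ b = 0) (f : AddMonoidAlgebra F M) :
    f ∈ augIdeal F M hM ↔ f.coeff 0 = 0 := by
  rw [augIdeal, RingHom.mem_ker, constantTermHom_apply]

/-- The augmentation ideal is a maximal ideal. -/
instance augIdeal_isMaximal (F M : Type*) [Field F] [AddCommMonoid M]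
    {hM : ∀ a b : M, a + b = 0 → a = 0 ∧ b = 0} : (augIdeal F M hM).IsMaximal :=
  RingHom.ker_isMaximal_of_surjective _ (fun c =>
    ⟨AddMonoidAlgebra.single 0 c, by simp [constantTermHom]⟩)

theorem nnrat_pos_monoid : ∀ a b : ℚ≥0, a + b = 0 → a = 0 ∧ b = 0 :=
  fun _ _ h => add_eq_zero.mp h


theorem exists_factor_aux (F : Type*) [Field F] (f : AddMonoidAlgebra F ℚ≥0) (hf : f ≠ 0) :
    ∃ (α : ℚ≥0) (g : AddMonoidAlgebra F ℚ≥0), g.coeff 0 ≠ 0 ∧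
      f = AddMonoidAlgebra.single α 1 * g := by
  have hsupp : f.coeff.support.Nonempty := Finsupp.support_nonempty_iff.mpr (by simpa using hf)
  set α := f.coeff.support.min' hsupp with hα
  refine ⟨α, AddMonoidAlgebra.comapDomain (α + ·) (add_right_injective α) f, ?_, ?_⟩
  · simpa [AddMonoidAlgebra.coeff_comapDomain] using
      Finsupp.mem_support_iff.mp (f.coeff.support.min'_mem hsupp)
  · ext β
    rcases le_or_gt α β with h | h
    · rw [AddMonoidAlgebra.coeff_single_mul_eq_mul_coeff (β - α)
        (fun a _ => ⟨fun h' => by rw [← h', add_tsub_cancel_left],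
          fun h' => by rw [h', add_tsub_cancel_of_le h]⟩)]
      rw [one_mul, AddMonoidAlgebra.coeff_comapDomain, Finsupp.comapDomain_apply,
        add_tsub_cancel_of_le h]
    · have hne : ∀ d, α + d ≠ β := by
        rintro d rfl
        exact absurd le_self_add (not_le.mpr h)
      rw [AddMonoidAlgebra.coeff_single_mul_of_forall_add_ne _ _ hne]
      have hb : β ∉ f.coeff.support := fun hb =>
        absurd (f.coeff.support.min'_le β hb) (not_le.mpr h)
      exact Finsupp.notMem_support_iff.mp hb

/-- Every nonzero element of the localization is a monomial times a unit. -/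
theorem exists_unit_factor (F : Type*) [Field F]
    (a : Localization.AtPrime (augIdeal F ℚ≥0 nnrat_pos_monoid)) (ha : a ≠ 0) :
    ∃ (α : ℚ≥0) (u : (Localization.AtPrime (augIdeal F ℚ≥0 nnrat_pos_monoid))ˣ),
      a = algebraMap (AddMonoidAlgebra F ℚ≥0) _ (AddMonoidAlgebra.single α 1) * u := by
  obtain ⟨⟨f, s⟩, hfs⟩ := IsLocalization.mk'_surjective
    (augIdeal F ℚ≥0 nnrat_pos_monoid).primeCompl a
  dsimp only at hfs
  have hf : f ≠ 0 := by
    rintro rfl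
    rw [← hfs] at ha
    exact ha (IsLocalization.mk'_zero s)
  obtain ⟨α, g, hg0, hfact⟩ := exists_factor_aux F f hf
  have hg : g ∈ (augIdeal F ℚ≥0 nnrat_pos_monoid).primeCompl := fun hgm =>
    hg0 ((mem_augIdeal_iff F ℚ≥0 nnrat_pos_monoid g).mp hgm)
  have hug : IsUnit (algebraMap (AddMonoidAlgebra F ℚ≥0)
      (Localization.AtPrime (augIdeal F ℚ≥0 nnrat_pos_monoid)) g) :=
    IsLocalization.map_units _ (⟨g, hg⟩ : (augIdeal F ℚ≥0 nnrat_pos_monoid).primeCompl)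
  have hus : IsUnit (algebraMap (AddMonoidAlgebra F ℚ≥0)
      (Localization.AtPrime (augIdeal F ℚ≥0 nnrat_pos_monoid)) (s : AddMonoidAlgebra F ℚ≥0)) :=
    IsLocalization.map_units _ s
  refine ⟨α, hug.unit * hus.unit⁻¹, ?_⟩
  rw [← hfs, Units.val_mul, ← mul_assoc, Units.eq_mul_inv_iff_mul_eq, IsUnit.unit_spec,
    IsUnit.unit_spec, IsLocalization.mk'_spec, hfact, map_mul]

theorem span_pair_isPrincipal_of_dvd {R : Type*} [CommRing R] {a b : R} (h : b ∣ a) :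
    (Ideal.span {a, b}).IsPrincipal := by
  have heq : Ideal.span ({a, b} : Set R) = Ideal.span {b} := by
    rw [Ideal.span_insert]
    exact sup_eq_right.mpr (Ideal.span_singleton_le_span_singleton.mpr h)
  rw [heq]
  exact ⟨⟨b, rfl⟩⟩

theorem dvd_of_exp_le (F : Type*) [Field F] {α β : ℚ≥0} (h : α ≤ β) :
    (algebraMap (AddMonoidAlgebra F ℚ≥0)
        (Localization.AtPrime (augIdeal F ℚ≥0 nnrat_pos_monoid))
        (AddMonoidAlgebra.single α 1)) ∣
      algebraMap (AddMonoidAlgebra F ℚ≥0) _ (AddMonoidAlgebra.single β 1) := by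
  refine ⟨algebraMap (AddMonoidAlgebra F ℚ≥0) _ (AddMonoidAlgebra.single (β - α) 1), ?_⟩
  rw [← map_mul, AddMonoidAlgebra.single_mul_single, one_mul, add_tsub_cancel_of_le h]

/-- Let `F` be a field, `R = F[X; ℚ≥0]` the monoid ring of the additive
monoid of nonnegative rationals, `m` its maximal ideal of elements with zero constant
term, and `D = R_m` the localization of `R` at `m`. Then `D` is a Bézout domain: every
ideal of `D` generated by two elements is principal. -/
theorem localization_monoidAlgebra_nnrat_bezout (F : Type*) [Field F] :
    IsDomain (Localization.AtPrime (augIdeal F ℚ≥0 nnrat_pos_monoid)) ∧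
    ∀ a b : Localization.AtPrime (augIdeal F ℚ≥0 nnrat_pos_monoid),
      (Ideal.span {a, b} : Ideal (Localization.AtPrime (augIdeal F ℚ≥0 nnrat_pos_monoid))).IsPrincipal := by
  have hdom : IsDomain (AddMonoidAlgebra F ℚ≥0) := by
    have : NoZeroDivisors (AddMonoidAlgebra F ℚ≥0) := inferInstance
    exact NoZeroDivisors.to_isDomain _
  have hDdom : IsDomain (Localization.AtPrime (augIdeal F ℚ≥0 nnrat_pos_monoid)) :=
    IsLocalization.isDomain_of_local_atPrime inferInstance
  refine ⟨hDdom, fun a b => ?_⟩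
  have key : a ∣ b ∨ b ∣ a := by
    rcases eq_or_ne a 0 with rfl | ha
    · exact Or.inr (dvd_zero b)
    rcases eq_or_ne b 0 with rfl | hb
    · exact Or.inl (dvd_zero a)
    obtain ⟨α, u, rfl⟩ := exists_unit_factor F a ha
    obtain ⟨β, v, rfl⟩ := exists_unit_factor F b hb
    rcases le_total α β with h | h
    · exact Or.inl ((Units.mul_right_dvd).mpr ((dvd_of_exp_le F h).mul_right _))
    · exact Or.inr ((Units.mul_right_dvd).mpr ((dvd_of_exp_le F h).mul_right _))
  rcases key with h | h
  · rw [Set.pair_comm]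
    exact span_pair_isPrincipal_of_dvd h
  · exact span_pair_isPrincipal_of_dvd h
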